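/- Let P be a symmetric idempotent real n×n matrix, M a symmetric positive definite real n×n matrix, μ > 0, and M̄ = P M P + μ (I − P). Then M̄ is invertible and its inverse commutes with P: M̄⁻¹ P = P M̄⁻¹ (equivalently, M̄⁻¹ (I − P) = (I − P) M̄⁻¹). -/

import Mathlib

open Matrix

/-- The constraint inertia matrix `M̄ = PMP + μ(I - P)` is invertible and its inverse
commutes with the projection `P`. -/
theorem stmt_13 (n : ℕ)
    (P M : Matrix (Fin n) (Fin n) ℝ)
    (hPsymm : Pᵀ = P) (hPidem : P * P = P)
    (hM : M.PosDef) (μ : ℝ) (hμ : 0 < μ)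
    (Mbar : Matrix (Fin n) (Fin n) ℝ)
    (hMbar : Mbar = P * M * P + μ • ((1 : Matrix (Fin n) (Fin n) ℝ) - P)) :
    IsUnit Mbar ∧ Mbar⁻¹ * P = P * Mbar⁻¹ := by
  set Q : Matrix (Fin n) (Fin n) ℝ := 1 - P with hQ
  have hQsymm : Qᵀ = Q := by simp [hQ, transpose_sub, hPsymm]
  have hQidem : Q * Q = Q := by
    simp [hQ, Matrix.sub_mul, Matrix.mul_sub, hPidem]
  -- Mbar is positive definite
  have hMsymm : Mᵀ = M := by
    have := hM.isHermitian
    simpa [Matrix.IsHermitian] using this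
  have hpd : Mbar.PosDef := by
    refine posDef_iff_dotProduct_mulVec.mpr ⟨?_, ?_⟩
    · show Mbarᴴ = Mbar
      have : Mbarᵀ = Mbar := by
        rw [hMbar]
        simp [transpose_add, transpose_mul, transpose_smul, transpose_sub,
          hPsymm, hMsymm, hQsymm, Matrix.mul_assoc]
      rw [conjTranspose_eq_transpose_of_trivial]; exact this
    · intro x hx
      have hstar : star x = x := by simp
      rw [hstar, hMbar]
      have hexp : (P * M * P + μ • ((1 : Matrix (Fin n) (Fin n) ℝ) - P)) *ᵥ x
          = P *ᵥ (M *ᵥ (P *ᵥ x)) + μ • (Q *ᵥ x) := by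
        simp [hQ, add_mulVec, smul_mulVec, Matrix.mul_assoc, mulVec_mulVec]
      rw [hexp, dotProduct_add]
      set y := P *ᵥ x with hy
      set z := Q *ᵥ x with hz
      have h1 : x ⬝ᵥ (P *ᵥ (M *ᵥ y)) = y ⬝ᵥ (M *ᵥ y) := by
        rw [dotProduct_mulVec, ← mulVec_transpose, hPsymm, ← hy]
      have h2 : x ⬝ᵥ (μ • (Q *ᵥ x)) = μ * (z ⬝ᵥ z) := by
        have : x ⬝ᵥ (Q *ᵥ x) = z ⬝ᵥ z := by
          conv_lhs => rw [← hQidem, ← mulVec_mulVec]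
          rw [dotProduct_mulVec, ← mulVec_transpose, hQsymm, ← hz]
        rw [dotProduct_smul, this, smul_eq_mul]
      rw [h1, h2]
      have hyz : y + z = x := by
        simp [hy, hz, hQ, sub_mulVec, Matrix.one_mulVec]
      by_cases hy0 : y = 0
      · have hz0 : z ≠ 0 := by
          intro h; apply hx; rw [← hyz, hy0, h, add_zero]
        have hzz : 0 ≤ z ⬝ᵥ z := Finset.sum_nonneg fun i _ => mul_self_nonneg (z i)
        have : 0 < z ⬝ᵥ z :=
          lt_of_le_of_ne hzz (Ne.symm (fun h => hz0 (dotProduct_self_eq_zero.mp h)))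
        have h0 : y ⬝ᵥ (M *ᵥ y) = 0 := by simp [hy0]
        rw [h0, zero_add]
        exact mul_pos hμ this
      · have hpos : 0 < y ⬝ᵥ (M *ᵥ y) := by
          have := hM.dotProduct_mulVec_pos hy0
          simpa using this
        have hnn : 0 ≤ μ * (z ⬝ᵥ z) :=
          mul_nonneg hμ.le (Finset.sum_nonneg fun i _ => mul_self_nonneg (z i))
        linarith
  have hU : IsUnit Mbar := hpd.isUnit
  refine ⟨hU, ?_⟩
  have hPQ : P * Q = 0 := by rw [hQ, Matrix.mul_sub, Matrix.mul_one, hPidem, sub_self]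
  have hQP : Q * P = 0 := by rw [hQ, Matrix.sub_mul, Matrix.one_mul, hPidem, sub_self]
  have hcomm : P * Mbar = Mbar * P := by
    rw [hMbar, Matrix.mul_add, Matrix.add_mul, Matrix.mul_smul, Matrix.smul_mul,
      hPQ, hQP, smul_zero]
    congr 1
    rw [← Matrix.mul_assoc, ← Matrix.mul_assoc, hPidem, Matrix.mul_assoc (P * M) P P, hPidem]
  have hinv : Mbar * Mbar⁻¹ = 1 := Matrix.mul_nonsing_inv _ (isUnit_iff_isUnit_det _ |>.1 hU)
  have hinv' : Mbar⁻¹ * Mbar = 1 := Matrix.nonsing_inv_mul _ (isUnit_iff_isUnit_det _ |>.1 hU)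
  calc Mbar⁻¹ * P = Mbar⁻¹ * P * (Mbar * Mbar⁻¹) := by rw [hinv, Matrix.mul_one]
    _ = Mbar⁻¹ * (P * Mbar) * Mbar⁻¹ := by simp only [Matrix.mul_assoc]
    _ = Mbar⁻¹ * (Mbar * P) * Mbar⁻¹ := by rw [hcomm]
    _ = P * Mbar⁻¹ := by rw [← Matrix.mul_assoc, hinv', Matrix.one_mul]
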